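/- Let (W,S) be a Coxeter system, L ⊆ S, w ∈ W, and t a reflection with t ∉ W_L such that wt covers w in Bruhat order. Then (wt)_L ≤_R w_L, where x_L denotes the W_L-component in the parabolic decomposition x = x^L x_L and ≤_R is the right weak order. -/

import Mathlib

namespace CoxAux

open List CoxeterSystem

variable {B : Type*} {W : Type*} [Group W] {M : CoxeterMatrix B} (cs : CoxeterSystem M W)

local prefix:100 "s" => cs.simple
local prefix:100 "π" => cs.wordProd
local prefix:100 "ℓ" => cs.length

open scoped Classical in
/-- underlying function of the reflection-parity permutation -/
noncomputable def pmFun (i : B) : W × ZMod 2 → W × ZMod 2 :=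
  fun x => (s i * x.1 * s i, x.2 + if x.1 = s i then 1 else 0)

lemma pmFun_involutive (i : B) : Function.Involutive (pmFun cs i) := by
  rintro ⟨w, z⟩
  simp only [pmFun]
  have h1 : s i * (s i * w * s i) * s i = w := by
    rw [← mul_assoc, ← mul_assoc, cs.simple_mul_simple_self, one_mul, mul_assoc,
      cs.simple_mul_simple_self, mul_one]
  have h2 : (s i * w * s i = s i) ↔ w = s i := by
    constructor
    · intro h
      have := congrArg (fun x => s i * x * s i) h
      simpa [← mul_assoc, cs.simple_mul_simple_self, mul_assoc] using this
    · rintro rfl; rw [cs.simple_mul_simple_self, one_mul]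
  rw [Prod.mk.injEq]
  refine ⟨h1, ?_⟩
  by_cases hw : w = s i
  · simp only [if_pos hw, eq_true (h2.mpr hw), if_true]
    rw [add_assoc,
      show (1 : ZMod 2) + 1 = 0 by decide, add_zero]
  · simp only [if_neg hw, eq_false (fun h => hw (h2.mp h)), if_false]
    rw [add_zero, add_zero]

/-- the reflection-parity permutation attached to a simple reflection -/
noncomputable def pm (i : B) : Equiv.Perm (W × ZMod 2) := (pmFun_involutive cs i).toPerm

lemma pm_apply (i : B) (x : W × ZMod 2) : pm cs i x = pmFun cs i x := rfl

lemma prod_pm_apply [DecidableEq W] (ω : List B) (x : W × ZMod 2) :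
    (ω.map (pm cs)).prod x = (π ω * x.1 * (π ω)⁻¹, x.2 + count x.1 (cs.rightInvSeq ω)) := by
  induction ω with
  | nil => simp
  | cons i ω ih =>
    rw [map_cons, prod_cons, Equiv.Perm.mul_apply, ih, pm_apply, pmFun]
    simp only [rightInvSeq]
    rw [count_cons]
    have hcond : (π ω * x.1 * (π ω)⁻¹ = s i) ↔ ((π ω)⁻¹ * s i * π ω == x.1) = true := by
      rw [beq_iff_eq]
      constructor
      · intro h; rw [← h]; group
      · intro h; rw [← h]; group
    have hcast : ((if ((π ω)⁻¹ * s i * π ω == x.1) = true then 1 else 0 : ℕ) : ZMod 2)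
        = if π ω * x.1 * (π ω)⁻¹ = s i then (1 : ZMod 2) else 0 := by
      by_cases hc : π ω * x.1 * (π ω)⁻¹ = s i
      · rw [if_pos hc, if_pos (hcond.mp hc), Nat.cast_one]
      · rw [if_neg hc, if_neg (fun h => hc (hcond.mpr h)), Nat.cast_zero]
    rw [Prod.mk.injEq]
    constructor
    · rw [cs.wordProd_cons, mul_inv_rev, cs.inv_simple]
      group
    · by_cases hc : π ω * x.1 * (π ω)⁻¹ = s i
      · rw [if_pos hc, if_pos (hcond.mp hc)]
        push_cast
        ring
      · rw [if_neg hc, if_neg (fun h => hc (hcond.mpr h))]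
        push_cast
        ring


/-- the word i j i j ... i j of length 2m -/
def dup (i j : B) : ℕ → List B
  | 0 => []
  | m + 1 => i :: j :: dup i j m

lemma wordProd_dup (i j : B) (m : ℕ) : π (dup i j m) = (s i * s j) ^ m := by
  induction m with
  | zero => simp [dup]
  | succ m ih =>
    rw [dup, cs.wordProd_cons, cs.wordProd_cons, ih, pow_succ']
    group

lemma simple_mul_pow (i j : B) (m : ℕ) :
    s j * (s i * s j) ^ m = (s j * s i) ^ m * s j := by
  induction m with
  | zero => simp
  | succ m ih =>
    calc s j * (s i * s j) ^ (m + 1)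
        = (s j * s i) * (s j * (s i * s j) ^ m) := by
            rw [pow_succ']; simp only [mul_assoc]
      _ = (s j * s i) * ((s j * s i) ^ m * s j) := by rw [ih]
      _ = (s j * s i) ^ (m + 1) * s j := by rw [pow_succ']; group

lemma rightInvSeq_dup (i j : B) (m : ℕ) :
    cs.rightInvSeq (dup i j m) =
      ((range (2 * m)).map (fun n => (s j * s i) ^ n * s j)).reverse := by
  induction m with
  | zero => simp [dup]
  | succ m ih =>
    have hq : (π (dup i j m))⁻¹ = (s j * s i) ^ m := by
      have hpq : (s i * s j)⁻¹ = s j * s i := by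
        rw [mul_inv_rev, cs.inv_simple, cs.inv_simple]
      rw [wordProd_dup, ← inv_pow, hpq]
    have e1 : (π (dup i j m))⁻¹ * s j * π (dup i j m) = (s j * s i) ^ (2 * m) * s j := by
      calc (π (dup i j m))⁻¹ * s j * π (dup i j m)
          = (s j * s i) ^ m * (s j * (s i * s j) ^ m) := by rw [hq, wordProd_dup]; group
        _ = (s j * s i) ^ m * ((s j * s i) ^ m * s j) := by rw [simple_mul_pow]
        _ = (s j * s i) ^ (2 * m) * s j := by rw [two_mul, pow_add]; group
    have e2 : (π (j :: dup i j m))⁻¹ * s i * π (j :: dup i j m)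
        = (s j * s i) ^ (2 * m + 1) * s j := by
      calc (π (j :: dup i j m))⁻¹ * s i * π (j :: dup i j m)
          = (π (dup i j m))⁻¹ * (s j * s i) * (s j * π (dup i j m)) := by
            rw [cs.wordProd_cons, mul_inv_rev, cs.inv_simple]; group
        _ = (s j * s i) ^ m * ((s j * s i) * (s j * (s i * s j) ^ m)) := by
            rw [hq, wordProd_dup]; group
        _ = (s j * s i) ^ m * ((s j * s i) * ((s j * s i) ^ m * s j)) := by rw [simple_mul_pow]
        _ = (s j * s i) ^ (2 * m + 1) * s j := by
            rw [show 2 * m + 1 = m + (1 + m) by ring, pow_add, pow_add, pow_one]; group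
    have h2 : 2 * (m + 1) = (2 * m) + 1 + 1 := by ring
    rw [h2, range_succ, range_succ]
    simp only [map_append, reverse_append, map_cons, map_nil]
    show cs.rightInvSeq (dup i j (m + 1)) = _
    rw [dup]
    show (π (j :: dup i j m))⁻¹ * s i * π (j :: dup i j m) ::
        cs.rightInvSeq (j :: dup i j m) = _
    show (π (j :: dup i j m))⁻¹ * s i * π (j :: dup i j m) ::
        (π (dup i j m))⁻¹ * s j * π (dup i j m) :: cs.rightInvSeq (dup i j m) = _
    rw [e1, e2, ih]
    simp

lemma pm_liftable : M.IsLiftable (pm cs) := by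
  classical
  intro i j
  apply Equiv.ext
  intro x
  have hprod : (pm cs i * pm cs j) ^ (M.M i j) = ((dup i j (M.M i j)).map (pm cs)).prod := by
    generalize M.M i j = m
    induction m with
    | zero => simp [dup]
    | succ k ih => rw [pow_succ', ih, dup, map_cons, map_cons, prod_cons, prod_cons, mul_assoc]
  have key : (range (2 * M.M i j)).map (fun n => (s j * s i) ^ n * s j)
      = ((range (M.M i j)).map (fun n => (s j * s i) ^ n * s j))
        ++ ((range (M.M i j)).map (fun n => (s j * s i) ^ n * s j)) := by
    rw [two_mul, range_add, map_append, map_map]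
    congr 1
    apply map_congr_left
    intro n _
    simp only [Function.comp_apply]
    rw [pow_add, cs.simple_mul_simple_pow' i j, one_mul]
  have heven : Even (count x.1 (cs.rightInvSeq (dup i j (M.M i j)))) := by
    rw [rightInvSeq_dup, count_reverse, key, count_append]
    exact ⟨_, rfl⟩
  obtain ⟨c, hc⟩ := heven
  rw [hprod, prod_pm_apply, wordProd_dup, cs.simple_mul_simple_pow i j, hc]
  have hzero : ((c + c : ℕ) : ZMod 2) = 0 := by
    push_cast
    rw [← two_mul, show (2 : ZMod 2) = 0 from by decide, zero_mul]
  rw [hzero, add_zero]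
  simp


noncomputable def phi : W →* Equiv.Perm (W × ZMod 2) := cs.lift ⟨pm cs, pm_liftable cs⟩

lemma phi_simple (i : B) : phi cs (s i) = pm cs i := cs.lift_apply_simple (pm_liftable cs) i

lemma phi_wordProd (ω : List B) : phi cs (π ω) = (ω.map (pm cs)).prod := by
  induction ω with
  | nil => simp [phi]
  | cons i ω ih =>
    rw [cs.wordProd_cons, map_mul, ih, map_cons, prod_cons, phi_simple]

/-- parity of the number of times t appears in an inversion sequence of w -/
noncomputable def nn (w t : W) : ZMod 2 := (phi cs w (t, 0)).2

lemma nn_eq_count [DecidableEq W] (ω : List B) (t : W) :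
    nn cs (π ω) t = count t (cs.rightInvSeq ω) := by
  rw [nn, phi_wordProd, prod_pm_apply]
  simp

lemma phi_apply_eq (u : W) (x : W × ZMod 2) :
    phi cs u x = (u * x.1 * u⁻¹, x.2 + nn cs u x.1) := by
  classical
  obtain ⟨ω, rfl⟩ := cs.wordProd_surjective u
  rw [phi_wordProd, prod_pm_apply, nn_eq_count]

lemma nn_simple_self (i : B) : nn cs (s i) (s i) = 1 := by
  classical
  have h : s i = π [i] := by simp
  rw [h, nn_eq_count]
  simp [rightInvSeq]

lemma nn_simple_mul [DecidableEq W] (j : B) (u x : W) :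
    nn cs (s j * u) x = nn cs u x + (if u * x * u⁻¹ = s j then 1 else 0) := by
  obtain ⟨ω, rfl⟩ := cs.wordProd_surjective u
  have h : s j * π ω = π (j :: ω) := (cs.wordProd_cons j ω).symm
  rw [h, nn_eq_count, nn_eq_count]
  show ((count x ((π ω)⁻¹ * s j * π ω :: cs.rightInvSeq ω) : ℕ) : ZMod 2) = _
  rw [count_cons]
  have hcond : ((π ω)⁻¹ * s j * π ω == x) = true ↔ π ω * x * (π ω)⁻¹ = s j := by
    rw [beq_iff_eq]
    constructor
    · intro h'; rw [← h']; group
    · intro h'; rw [← h']; group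
  by_cases hc : π ω * x * (π ω)⁻¹ = s j
  · rw [if_pos (hcond.mpr hc), if_pos hc]; push_cast; ring
  · rw [if_neg (fun h' => hc (hcond.mp h')), if_neg hc]; push_cast; ring

lemma nn_mul_simple [DecidableEq W] (j : B) (u x : W) :
    nn cs (u * s j) x = nn cs u (s j * x * s j) + (if x = s j then 1 else 0) := by
  obtain ⟨ω, rfl⟩ := cs.wordProd_surjective u
  have h : π ω * s j = π (ω.concat j) := (cs.wordProd_concat j ω).symm
  rw [h, nn_eq_count, nn_eq_count, cs.rightInvSeq_concat]
  rw [show (map (⇑(MulAut.conj (s j))) (cs.rightInvSeq ω)).concat (s j)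
      = (map (⇑(MulAut.conj (s j))) (cs.rightInvSeq ω)) ++ [s j] from concat_eq_append]
  rw [count_append]
  have hinj : Function.Injective (⇑(MulAut.conj (s j)) : W → W) := (MulAut.conj (s j)).injective
  have hx : (MulAut.conj (s j)) (s j * x * s j) = x := by
    rw [MulAut.conj_apply, cs.inv_simple, ← mul_assoc, ← mul_assoc,
      cs.simple_mul_simple_self, one_mul, mul_assoc, cs.simple_mul_simple_self, mul_one]
  rw [show count x (map (⇑(MulAut.conj (s j))) (cs.rightInvSeq ω))
      = count (s j * x * s j) (cs.rightInvSeq ω) from by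
    rw [← hx, count_map_of_injective _ _ hinj, hx]]
  have hsingle : count x [s j] = if x = s j then 1 else 0 := by
    by_cases hc : x = s j
    · simp [hc]
    · have hc' : ¬ (s j = x) := fun h' => hc h'.symm
      simp [count_cons, hc, hc']
  rw [hsingle]
  by_cases hc : x = s j
  · rw [if_pos hc, if_pos hc]; push_cast; ring
  · rw [if_neg hc, if_neg hc]; push_cast; ring

lemma nn_reflection_self (t : W) (ht : cs.IsReflection t) : nn cs t t = 1 := by
  classical
  obtain ⟨v, i, rfl⟩ := ht
  generalize hn : ℓ v = n
  induction n using Nat.strong_induction_on generalizing v with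
  | _ n ih =>
    by_cases hv : v = 1
    · subst hv
      simpa using nn_simple_self cs i
    · obtain ⟨ω, hlen, hprod⟩ := cs.exists_reduced_word v
      have hω : ω ≠ [] := by
        intro h
        rw [h] at hprod
        simp at hprod
        exact hv hprod
      obtain ⟨j, ω', rfl⟩ := List.exists_cons_of_ne_nil hω
      set v' := π ω' with hv'
      have hvv : v = s j * v' := by rw [hprod, cs.wordProd_cons]
      have hn0 : n ≠ 0 := by
        rw [← hn]
        exact fun h => hv (cs.length_eq_zero_iff.mp h)
      have hlenv' : ℓ v' < n := by
        have h1 : ℓ v' ≤ ω'.length := cs.length_wordProd_le ω'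
        have h2 : ω'.length + 1 = n := by
          rw [← hn]
          have h' : ℓ (π (j :: ω')) = (j :: ω').length := hlen
          rw [← hprod] at h'
          simpa using h'.symm
        omega
      set t := v * s i * v⁻¹ with hts
      set t' := v' * s i * v'⁻¹ with hts'
      have htt' : t = s j * t' * s j := by
        rw [hts, hts', hvv]
        rw [mul_inv_rev, cs.inv_simple]
        group
      have step1 : nn cs t t = nn cs (t' * s j) t + (if t' = s j then 1 else 0) := by
        have e := nn_simple_mul cs j (t' * s j) t
        rw [show s j * (t' * s j) = t from by rw [htt']; exact (mul_assoc _ _ _).symm] at e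
        rw [e]
        congr 1
        have expand : (t' * s j) * t * (t' * s j)⁻¹ = t' := by
          simp [htt', mul_inv_rev, cs.inv_simple, mul_assoc,
            cs.simple_mul_simple_cancel_left]
        have hcond : (t' * s j) * t * (t' * s j)⁻¹ = s j ↔ t' = s j := by
          rw [expand]
        by_cases hc : t' = s j
        · rw [if_pos (hcond.mpr hc), if_pos hc]
        · rw [if_neg (fun h' => hc (hcond.mp h')), if_neg hc]
      have step2 : nn cs (t' * s j) t = nn cs t' t' + (if t = s j then 1 else 0) := by
        rw [nn_mul_simple]
        congr 2
        rw [htt']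
        simp [mul_assoc, cs.simple_mul_simple_cancel_left, cs.simple_mul_simple_self]
      have hiff : t = s j ↔ t' = s j := by
        rw [htt']
        constructor
        · intro h
          have h3 := congrArg (fun x => s j * x * s j) h
          simp [mul_assoc, cs.simple_mul_simple_cancel_left,
            cs.simple_mul_simple_self] at h3
          exact h3
        · intro h
          rw [h, cs.simple_mul_simple_self, one_mul]
      have hind : (if t = s j then (1 : ZMod 2) else 0) = (if t' = s j then 1 else 0) := by
        by_cases hc : t = s j
        · rw [if_pos hc, if_pos (hiff.mp hc)]
        · rw [if_neg hc, if_neg (fun h' => hc (hiff.mpr h'))]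
      have hih : nn cs t' t' = 1 := ih (ℓ v') hlenv' v' rfl
      rw [step1, step2, hih, hind]
      by_cases hc : t' = s j
      · simp only [if_pos hc]; decide
      · simp only [if_neg hc]; decide


lemma nn_one_imp_inversion (w t : W) (h : nn cs w t = 1) : ℓ (w * t) < ℓ w := by
  classical
  obtain ⟨ω, hred, hw⟩ := cs.exists_reduced_word' w
  subst hw
  rw [nn_eq_count] at h
  have hne : count t (cs.rightInvSeq ω) ≠ 0 := by
    intro h0
    rw [h0] at h
    simp at h
  have hmem : t ∈ cs.rightInvSeq ω := by
    by_contra hmem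
    exact hne (count_eq_zero.mpr hmem)
  exact (cs.isRightInversion_of_mem_rightInvSeq hred hmem).2

lemma nn_decompose (w t : W) (ht : cs.IsReflection t) :
    nn cs w t = nn cs (w * t) t + 1 := by
  have h1 : phi cs w (t, 0) = phi cs (w * t) (phi cs t (t, 0)) := by
    rw [← Equiv.Perm.mul_apply, ← map_mul, mul_assoc, ht.mul_self, mul_one]
  have e1 : phi cs t (t, 0) = (t, nn cs t t) := by
    rw [phi_apply_eq]
    rw [Prod.mk.injEq]
    constructor
    · show t * t * t⁻¹ = t
      rw [ht.mul_self, one_mul, ht.inv]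
    · show (0 : ZMod 2) + nn cs t t = nn cs t t
      rw [zero_add]
  rw [e1] at h1
  have e2 : phi cs (w * t) (t, nn cs t t)
      = ((w * t) * t * (w * t)⁻¹, nn cs t t + nn cs (w * t) t) := phi_apply_eq cs _ _
  have e3 : phi cs w (t, 0) = (w * t * w⁻¹, (0 : ZMod 2) + nn cs w t) := phi_apply_eq cs _ _
  rw [e3, e2] at h1
  have h3 := congrArg Prod.snd h1
  simp only at h3
  rw [zero_add] at h3
  rw [h3, nn_reflection_self cs t ht]
  ring

/-- Strong exchange (membership form). -/
lemma strong_exchange_mem (ω : List B) (t : W) (ht : cs.IsReflection t)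
    (hlt : ℓ (π ω * t) < ℓ (π ω)) : t ∈ cs.rightInvSeq ω := by
  classical
  have h1 : nn cs (π ω) t = nn cs (π ω * t) t + 1 := nn_decompose cs (π ω) t ht
  have h2 : nn cs (π ω * t) t = 0 := by
    have hcases : nn cs (π ω * t) t = 0 ∨ nn cs (π ω * t) t = 1 := by
      generalize nn cs (π ω * t) t = z
      revert z
      decide
    rcases hcases with h | h
    · exact h
    · exfalso
      have := nn_one_imp_inversion cs (π ω * t) t h
      rw [mul_assoc, ht.mul_self, mul_one] at this
      omega
  rw [h2, zero_add] at h1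
  rw [nn_eq_count] at h1
  have hne : count t (cs.rightInvSeq ω) ≠ 0 := by
    intro h0
    rw [h0] at h1
    simp at h1
  by_contra hmem
  exact hne (count_eq_zero.mpr hmem)

lemma mem_rightInvSeq_erase (ω : List B) (t : W) (hmem : t ∈ cs.rightInvSeq ω) :
    ∃ j < ω.length, π ω * t = π (ω.eraseIdx j) := by
  obtain ⟨j, hj, hjt⟩ := List.getElem_of_mem hmem
  have hj' : j < ω.length := by
    have := cs.length_rightInvSeq ω
    omega
  refine ⟨j, hj', ?_⟩
  have := cs.wordProd_mul_getD_rightInvSeq ω j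
  rw [List.getD_eq_getElem _ 1 hj, hjt] at this
  exact this

/-- Strong exchange. -/
lemma strong_exchange (ω : List B) (t : W) (ht : cs.IsReflection t)
    (hlt : ℓ (π ω * t) < ℓ (π ω)) : ∃ j < ω.length, π ω * t = π (ω.eraseIdx j) := by
  exact mem_rightInvSeq_erase cs ω t (strong_exchange_mem cs ω t ht hlt)

/-- Deletion: every word has a reduced sublist with the same product. -/
lemma exists_reduced_sublist (ω : List B) :
    ∃ ω', ω' <+ ω ∧ cs.IsReduced ω' ∧ π ω' = π ω := by
  classical
  -- strong induction on length
  suffices h : ∀ n (ω : List B), ω.length ≤ n → ∃ ω', ω' <+ ω ∧ cs.IsReduced ω' ∧ π ω' = π ω by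
    exact h ω.length ω le_rfl
  intro n
  induction n with
  | zero =>
    intro ω hl
    rw [Nat.le_zero, List.length_eq_zero_iff] at hl
    subst hl
    exact ⟨[], List.Sublist.refl _, by simp [CoxeterSystem.IsReduced], rfl⟩
  | succ n ih =>
    intro ω hl
    by_cases hred : cs.IsReduced ω
    · exact ⟨ω, List.Sublist.refl _, hred, rfl⟩
    · -- find minimal non-reduced prefix
      have hP : ∃ k, ¬ cs.IsReduced (ω.take (k + 1)) := by
        refine ⟨ω.length - 1, ?_⟩
        have hω : ω ≠ [] := by
          intro h
          subst h
          exact hred (by simp [CoxeterSystem.IsReduced])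
        have h1 : 1 ≤ ω.length := by
          cases ω with
          | nil => exact absurd rfl hω
          | cons a l => simp
        rw [show ω.length - 1 + 1 = ω.length by omega, List.take_of_length_le le_rfl]
        exact hred
      set k := Nat.find hP with hk
      have hknot : ¬ cs.IsReduced (ω.take (k + 1)) := Nat.find_spec hP
      have hkred : cs.IsReduced (ω.take k) := by
        rcases Nat.eq_zero_or_pos k with h0 | h0
        · rw [h0]
          simp [CoxeterSystem.IsReduced]
        · have := Nat.find_min hP (m := k - 1) (by omega)
          rw [not_not] at this
          rwa [show k - 1 + 1 = k by omega] at this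
      have hklt : k < ω.length := by
        by_contra hge
        push_neg at hge
        have hω : ω ≠ [] := by
          intro h
          subst h
          exact hred (by simp [CoxeterSystem.IsReduced])
        have h1 : 1 ≤ ω.length := by
          cases ω with
          | nil => exact absurd rfl hω
          | cons a l => simp
        have : ¬ cs.IsReduced (ω.take (ω.length - 1 + 1)) := by
          rw [show ω.length - 1 + 1 = ω.length by omega, List.take_of_length_le le_rfl]
          exact hred
        have hle : k ≤ ω.length - 1 := Nat.find_min' hP this
        omega
      -- take (k+1) = take k ++ [ω[k]]
      have htake : ω.take (k + 1) = ω.take k ++ [ω[k]] := by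
        rw [List.take_succ]
        congr
        rw [List.getElem?_eq_getElem hklt]
        rfl
      have hlen_take : (ω.take k).length = k := by
        rw [List.length_take]
        omega
      have hlred : ℓ (π (ω.take k)) = k := by
        rw [hkred]
        exact hlen_take
      have hdrop : ℓ (π (ω.take k) * s (ω[k])) < ℓ (π (ω.take k)) := by
        rcases cs.length_mul_simple (π (ω.take k)) ω[k] with h | h
        · exfalso
          apply hknot
          show ℓ (π (ω.take (k + 1))) = (ω.take (k + 1)).length
          rw [htake, cs.wordProd_append, cs.wordProd_singleton, h, hlred,
            List.length_append, hlen_take]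
          simp
        · omega
      obtain ⟨j, hj, hjer⟩ := strong_exchange cs (ω.take k) (s (ω[k]))
        (cs.isReflection_simple _) hdrop
      set ν := ((ω.take k).eraseIdx j) ++ ω.drop (k + 1) with hν
      have hνsub : ν <+ ω := by
        have h1 : (ω.take k).eraseIdx j <+ ω.take k := List.eraseIdx_sublist _ _
        have h2 : ω.take k <+ ω.take (k + 1) := by
          rw [htake]
          exact List.sublist_append_left _ _
        have h3 : (ω.take k).eraseIdx j <+ ω.take (k + 1) := h1.trans h2
        have h4 : ν <+ ω.take (k + 1) ++ ω.drop (k + 1) := List.Sublist.append h3 (List.Sublist.refl _)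
        rwa [List.take_append_drop] at h4
      have hνprod : π ν = π ω := by
        rw [hν, cs.wordProd_append, ← hjer]
        have : π ω = π (ω.take (k + 1)) * π (ω.drop (k + 1)) := by
          rw [← cs.wordProd_append, List.take_append_drop]
        rw [this, htake, cs.wordProd_append]
        simp only [cs.wordProd_singleton]
      have hνlen : ν.length ≤ n := by
        have h1 : ((ω.take k).eraseIdx j).length = k - 1 := by
          rw [List.length_eraseIdx]
          rw [hlen_take] at hj ⊢
          simp [hj]
        have h2 : (ω.drop (k + 1)).length = ω.length - (k + 1) := by
          rw [List.length_drop]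
        have : ν.length = (k - 1) + (ω.length - (k + 1)) := by
          rw [hν, List.length_append, h1, h2]
        rw [hlen_take] at hj
        omega
      obtain ⟨ω', hsub', hred', hprod'⟩ := ih ν hνlen
      exact ⟨ω', hsub'.trans hνsub, hred', by rw [hprod', hνprod]⟩


variable {L : Set B}

lemma word_mem_closure (ω : List B) (h : ∀ i ∈ ω, i ∈ L) :
    π ω ∈ Subgroup.closure (cs.simple '' L) := by
  induction ω with
  | nil => exact (by simp : π ([] : List B) = 1) ▸ one_mem _
  | cons i ω ih =>
    rw [cs.wordProd_cons]
    exact mul_mem (Subgroup.subset_closure ⟨i, h i (List.mem_cons_self), rfl⟩)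
      (ih fun j hj => h j (List.mem_cons_of_mem _ hj))

lemma closure_word (u : W) (hu : u ∈ Subgroup.closure (cs.simple '' L)) :
    ∃ ω, (∀ i ∈ ω, i ∈ L) ∧ π ω = u := by
  refine Subgroup.closure_induction ?_ ?_ ?_ ?_ hu
  · rintro x ⟨i, hi, rfl⟩
    exact ⟨[i], by simpa using hi, by simp⟩
  · exact ⟨[], by simp, by simp⟩
  · rintro x y _ _ ⟨ω1, h1, rfl⟩ ⟨ω2, h2, rfl⟩
    refine ⟨ω1 ++ ω2, ?_, cs.wordProd_append _ _⟩
    intro i hi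
    rcases List.mem_append.mp hi with h | h
    · exact h1 i h
    · exact h2 i h
  · rintro x _ ⟨ω1, h1, rfl⟩
    exact ⟨ω1.reverse, fun i hi => h1 i (List.mem_reverse.mp hi), cs.wordProd_reverse ω1⟩

lemma closure_reduced_word (u : W) (hu : u ∈ Subgroup.closure (cs.simple '' L)) :
    ∃ ω, (∀ i ∈ ω, i ∈ L) ∧ cs.IsReduced ω ∧ π ω = u := by
  obtain ⟨ω, hL, hprod⟩ := closure_word cs u hu
  obtain ⟨ω', hsub, hred, hprod'⟩ := exists_reduced_sublist cs ω
  exact ⟨ω', fun i hi => hL i (hsub.subset hi), hred, by rw [hprod', hprod]⟩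

lemma rightInvSeq_append (α δ : List B) :
    cs.rightInvSeq (α ++ δ) =
      (cs.rightInvSeq α).map (fun x => (π δ)⁻¹ * x * π δ) ++ cs.rightInvSeq δ := by
  induction α with
  | nil => simp [rightInvSeq]
  | cons i α ih =>
    show ((π (α ++ δ))⁻¹ * s i * π (α ++ δ)) :: cs.rightInvSeq (α ++ δ) = _
    rw [ih]
    show _ = ((π δ)⁻¹ * ((π α)⁻¹ * s i * π α) * π δ) ::
      ((cs.rightInvSeq α).map (fun x => (π δ)⁻¹ * x * π δ) ++ cs.rightInvSeq δ)
    congr 1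
    rw [cs.wordProd_append, mul_inv_rev]
    group

lemma length_mul_of_min (a : W)
    (hmin : ∀ z ∈ Subgroup.closure (cs.simple '' L), ℓ a ≤ ℓ (a * z))
    (u : W) (hu : u ∈ Subgroup.closure (cs.simple '' L)) :
    ℓ (a * u) = ℓ a + ℓ u := by
  classical
  suffices h : ∀ n u, u ∈ Subgroup.closure (cs.simple '' L) → ℓ u ≤ n →
      ℓ (a * u) = ℓ a + ℓ u from h (ℓ u) u hu le_rfl
  intro n
  induction n with
  | zero =>
    intro u hu hlen
    rw [Nat.le_zero] at hlen
    rw [cs.length_eq_zero_iff.mp hlen, mul_one, cs.length_one, add_zero]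
  | succ n ih =>
    intro u hu hlen
    by_cases hsmall : ℓ u ≤ n
    · exact ih u hu hsmall
    · have hlu : ℓ u = n + 1 := by omega
      obtain ⟨δ, hδL, hδred, hδprod⟩ := closure_reduced_word cs u hu
      have hδlen : δ.length = n + 1 := by
        rw [← hlu, ← hδprod]
        exact hδred.symm
      rcases List.eq_nil_or_concat δ with h0 | ⟨δ₀, ilast, rfl⟩
      · rw [h0] at hδlen; simp at hδlen
      · have hδ₀len : δ₀.length = n := by
          rw [List.length_concat] at hδlen
          omega
        set u' := π δ₀ with hu'
        have hu'mem : u' ∈ Subgroup.closure (cs.simple '' L) := by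
          apply word_mem_closure
          intro i hi
          exact hδL i (by rw [List.concat_eq_append]; exact List.mem_append_left _ hi)
        have hilast : ilast ∈ L :=
          hδL ilast (by rw [List.concat_eq_append]; exact List.mem_append_right _ (by simp))
        have hu'u : u = u' * s ilast := by rw [← hδprod, cs.wordProd_concat]
        have hlu' : ℓ u' = n := by
          have h1 : ℓ u' ≤ n := by
            rw [← hδ₀len]
            exact cs.length_wordProd_le δ₀
          have h2 : ℓ u ≤ ℓ u' + 1 := by
            rw [hu'u]
            have := cs.length_mul_le u' (s ilast)
            rw [cs.length_simple] at this
            exact this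
          omega
        have hau' : ℓ (a * u') = ℓ a + n := by
          rw [← hlu']
          exact ih u' hu'mem (by omega)
        rcases cs.length_mul_simple (a * u') ilast with h | h
        · rw [hu'u, ← mul_assoc, h, hau', ← hu'u, hlu]
          omega
        · exfalso
          obtain ⟨α, hαred, hαprod⟩ := cs.exists_reduced_word' a
          have hαlen : α.length = ℓ a := by rw [hαprod]; exact hαred.symm
          have hword : π (α ++ δ₀) = a * u' := by rw [cs.wordProd_append, ← hαprod]
          have hredword : cs.IsReduced (α ++ δ₀) := by
            show ℓ (π (α ++ δ₀)) = _
            rw [hword, hau', List.length_append, hαlen, hδ₀len]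
          have hinv : ℓ (π (α ++ δ₀) * s ilast) < ℓ (π (α ++ δ₀)) := by
            rw [hword]
            omega
          have hmem := strong_exchange_mem cs (α ++ δ₀) (s ilast)
            (cs.isReflection_simple _) hinv
          rw [rightInvSeq_append] at hmem
          rcases List.mem_append.mp hmem with hm | hm
          · obtain ⟨x, hx, hxe⟩ := List.mem_map.mp hm
            have hxval : x = u' * s ilast * u'⁻¹ := by
              have h5 := congrArg (fun y => π δ₀ * y * (π δ₀)⁻¹) hxe
              rw [show π δ₀ * ((π δ₀)⁻¹ * x * π δ₀) * (π δ₀)⁻¹ = x from by group] at h5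
              exact h5
            have hxmem : x ∈ Subgroup.closure (cs.simple '' L) := by
              rw [hxval]
              exact mul_mem (mul_mem hu'mem (Subgroup.subset_closure ⟨ilast, hilast, rfl⟩))
                (inv_mem hu'mem)
            have hxinv := (cs.isRightInversion_of_mem_rightInvSeq hαred hx).2
            rw [← hαprod] at hxinv
            exact absurd (hmin x hxmem) (by omega)
          · obtain ⟨j, hj, hjer⟩ := mem_rightInvSeq_erase cs δ₀ _ hm
            have hshort : ℓ u ≤ (δ₀.eraseIdx j).length := by
              rw [hu'u, hu', hjer]
              exact cs.length_wordProd_le _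
            rw [List.length_eraseIdx, if_pos hj] at hshort
            omega


lemma length_mul_of_noDescent (a : W)
    (ha : ∀ i ∈ L, ℓ a < ℓ (a * s i))
    (u : W) (hu : u ∈ Subgroup.closure (cs.simple '' L)) :
    ℓ (a * u) = ℓ a + ℓ u := by
  classical
  set S : Set ℕ := {m | ∃ z ∈ Subgroup.closure (cs.simple '' L), ℓ (a * z) = m} with hSdef
  have hS : S.Nonempty := ⟨ℓ a, 1, one_mem _, by rw [mul_one]⟩
  obtain ⟨z₀, hz₀, hz₀len⟩ := Nat.sInf_mem hS
  have hmin₀ : ∀ z ∈ Subgroup.closure (cs.simple '' L), ℓ (a * z₀) ≤ ℓ ((a * z₀) * z) := by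
    intro z hz
    rw [hz₀len, mul_assoc]
    exact Nat.sInf_le ⟨z₀ * z, mul_mem hz₀ hz, rfl⟩
  have key : ∀ v ∈ Subgroup.closure (cs.simple '' L), ℓ ((a * z₀) * v) = ℓ (a * z₀) + ℓ v :=
    fun v hv => length_mul_of_min cs (a * z₀) hmin₀ v hv
  have hz1 : z₀ = 1 := by
    by_contra hne
    have hzmem : z₀⁻¹ ∈ Subgroup.closure (cs.simple '' L) := inv_mem hz₀
    obtain ⟨δ, hδL, hδred, hδprod⟩ := closure_reduced_word cs z₀⁻¹ hzmem
    have hδne : δ ≠ [] := by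
      intro h0
      rw [h0] at hδprod
      simp at hδprod
      exact hne hδprod
    rcases List.eq_nil_or_concat δ with h0 | ⟨δ₀, ilast, rfl⟩
    · exact hδne h0
    · have hilast : ilast ∈ L :=
        hδL ilast (by rw [List.concat_eq_append]; exact List.mem_append_right _ (by simp))
      have hδ₀mem : π δ₀ ∈ Subgroup.closure (cs.simple '' L) := by
        apply word_mem_closure
        intro i hi
        exact hδL i (by rw [List.concat_eq_append]; exact List.mem_append_left _ hi)
      have hsplit : z₀⁻¹ = π δ₀ * s ilast := by rw [← hδprod, cs.wordProd_concat]
      have hzsi : z₀⁻¹ * s ilast = π δ₀ := by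
        rw [hsplit, mul_assoc, cs.simple_mul_simple_self, mul_one]
      have hasi : a * s ilast = (a * z₀) * π δ₀ := by
        rw [← hzsi, ← mul_assoc, mul_assoc a z₀ z₀⁻¹]
        simp
      have hlen1 : ℓ (a * s ilast) = ℓ (a * z₀) + ℓ (π δ₀) := by
        rw [hasi]
        exact key _ hδ₀mem
      have hlen2 : ℓ a = ℓ (a * z₀) + ℓ z₀⁻¹ := by
        have h8 := key z₀⁻¹ hzmem
        rwa [mul_inv_cancel_right] at h8
      have hlδ : ℓ z₀⁻¹ = δ₀.length + 1 := by
        rw [← hδprod, hδred, List.length_concat]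
      have hlδ₀ : ℓ (π δ₀) ≤ δ₀.length := cs.length_wordProd_le δ₀
      have := ha ilast hilast
      omega
  rw [hz1, mul_one] at key
  exact key u hu

end CoxAux


section BruhatSetup

variable {B : Type*} {W : Type*} [Group W] {M : CoxeterMatrix B}

/-- Strong Bruhat order: `u ≤ v` iff every reduced word for `v` has a sublist
that is a reduced word for `u`. -/
def BruhatLE (cs : CoxeterSystem M W) (u v : W) : Prop :=
  ∀ ω : List B, cs.IsReduced ω → cs.wordProd ω = v →
    ∃ ω' : List B, List.Sublist ω' ω ∧ cs.IsReduced ω' ∧ cs.wordProd ω' = u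

/-- Strict strong Bruhat order. -/
def BruhatLT (cs : CoxeterSystem M W) (u v : W) : Prop :=
  BruhatLE cs u v ∧ u ≠ v

/-- The standard parabolic subgroup `W_L` generated by the simple reflections in `L`. -/
def parab (cs : CoxeterSystem M W) (L : Set B) : Subgroup W :=
  Subgroup.closure (cs.simple '' L)

/-- The set `W^L` of minimal length coset representatives for `W / W_L`. -/
def minReps (cs : CoxeterSystem M W) (L : Set B) : Set W :=
  {w : W | ∀ i ∈ L, cs.length w < cs.length (w * cs.simple i)}

/-- Right weak order: `v ≤_R w` iff `ℓ(w) = ℓ(w v⁻¹) + ℓ(v)`. -/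
def leR (cs : CoxeterSystem M W) (v w : W) : Prop :=
  cs.length w = cs.length (w * v⁻¹) + cs.length v

theorem statement_11 (cs : CoxeterSystem M W) (L : Set B) (w t : W)
    (ht : cs.IsReflection t) (htL : t ∉ parab cs L)
    (hlt : BruhatLT cs w (w * t)) (hcov : cs.length (w * t) = cs.length w + 1)
    (a b a' b' : W)
    (ha : a ∈ minReps cs L) (hb : b ∈ parab cs L) (hab : w = a * b)
    (hlab : cs.length w = cs.length a + cs.length b)
    (ha' : a' ∈ minReps cs L) (hb' : b' ∈ parab cs L) (hab' : w * t = a' * b')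
    (hlab' : cs.length (w * t) = cs.length a' + cs.length b') :
    leR cs b' b := by
  classical
  have hb'c : b' ∈ Subgroup.closure (cs.simple '' L) := hb'
  obtain ⟨α, hαred, hαprod⟩ := cs.exists_reduced_word' a'
  obtain ⟨β, hβL, hβred, hβprod⟩ := CoxAux.closure_reduced_word cs b' hb'c
  have hαlen : α.length = cs.length a' := by rw [hαprod]; exact hαred.symm
  have hβlen : β.length = cs.length b' := by rw [← hβprod]; exact hβred.symm
  have hprodw : cs.wordProd (α ++ β) = w * t := by
    rw [cs.wordProd_append, ← hαprod, hβprod, ← hab']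
  have hωred : cs.IsReduced (α ++ β) := by
    show cs.length (cs.wordProd (α ++ β)) = _
    rw [hprodw, List.length_append, hαlen, hβlen, hlab']
  obtain ⟨ω', hsub, hω'red, hω'prod⟩ := hlt.1 (α ++ β) hωred hprodw
  have hω'len : ω'.length = cs.length w := by rw [← hω'prod]; exact hω'red.symm
  obtain ⟨α', β', rfl, hα', hβ'⟩ := List.sublist_append_iff.mp hsub
  have hlen_sum : α'.length + β'.length = cs.length w := by
    rw [← hω'len, List.length_append]
  have hαle := hα'.length_le
  have hβle := hβ'.length_le
  by_cases hββ : β'.length = β.length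
  · -- the deleted letter is in the α part
    have hββeq : β' = β := hβ'.eq_of_length hββ
    subst hββeq
    have hwprod : w = cs.wordProd α' * b' := by
      rw [← hω'prod, cs.wordProd_append, hβprod]
    have hwb' : w * b'⁻¹ = cs.wordProd α' := by
      rw [hwprod, mul_inv_cancel_right]
    have h1 : cs.length (w * b'⁻¹) ≤ α'.length := by
      rw [hwb']
      exact cs.length_wordProd_le α'
    have h2 : b * b'⁻¹ ∈ Subgroup.closure (cs.simple '' L) :=
      mul_mem (hb : b ∈ parab cs L) (inv_mem hb'c)
    have h3 : w * b'⁻¹ = a * (b * b'⁻¹) := by rw [hab, mul_assoc]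
    have h4 : cs.length (w * b'⁻¹) = cs.length a + cs.length (b * b'⁻¹) := by
      rw [h3]
      exact CoxAux.length_mul_of_noDescent cs a ha (b * b'⁻¹) h2
    have h5 : cs.length b ≤ cs.length (b * b'⁻¹) + cs.length b' := by
      have h6 := cs.length_mul_le (b * b'⁻¹) b'
      rwa [inv_mul_cancel_right] at h6
    show cs.length b = cs.length (b * b'⁻¹) + cs.length b'
    omega
  · -- the deleted letter is in the β part : contradiction with t ∉ W_L
    exfalso
    have hααeq : α' = α := hα'.eq_of_length (by omega)
    subst hααeq
    have hβ'mem : cs.wordProd β' ∈ Subgroup.closure (cs.simple '' L) :=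
      CoxAux.word_mem_closure cs β' (fun i hi => hβL i (hβ'.subset hi))
    have h6 : w = a' * cs.wordProd β' := by
      rw [← hω'prod, cs.wordProd_append, hαprod]
    have h7 : a' * (cs.wordProd β' * t) = a' * b' := by
      rw [← mul_assoc, ← h6, hab']
    have h8 : cs.wordProd β' * t = b' := mul_left_cancel h7
    have ht' : t = (cs.wordProd β')⁻¹ * b' := by
      rw [← h8, inv_mul_cancel_left]
    apply htL
    show t ∈ Subgroup.closure (cs.simple '' L)
    rw [ht']
    exact mul_mem (inv_mem hβ'mem) hb'c

end BruhatSetup
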